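/- For every integer n ≥ 1, ζ_ℤ(-n + 1/2) = 4^{2n} / (2π n · binom(2n, n)), i.e., 4^{n-1/2} π^{-1/2} Γ(n)/Γ(1/2 + n) = 4^{2n} n! n! / (2π n (2n)!). -/

import Mathlib

open Real Nat

theorem zetaZ_special_value_neg_half_int (n : ℕ) (hn : 1 ≤ n) :
    (4 : ℝ) ^ ((n : ℝ) - 1 / 2) * (Real.sqrt Real.pi)⁻¹ *
        Real.Gamma n / Real.Gamma (1 / 2 + n) =
      (4 : ℝ) ^ (2 * n) / (2 * Real.pi * n * Nat.choose (2 * n) n) := by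
  obtain ⟨m, rfl⟩ : ∃ m, n = m + 1 := ⟨n - 1, (Nat.succ_pred_eq_of_pos hn).symm⟩
  have hπ : (0 : ℝ) < Real.pi := Real.pi_pos
  have hsπ : Real.sqrt Real.pi ≠ 0 := by positivity
  have hΓn : Real.Gamma ((m + 1 : ℕ) : ℝ) = (m ! : ℝ) := by
    exact_mod_cast Real.Gamma_nat_eq_factorial m
  have hΓ2n : Real.Gamma (2 * ((m + 1 : ℕ) : ℝ)) = ((2 * m + 1)! : ℝ) := by
    have : (2 * ((m + 1 : ℕ) : ℝ)) = ((2 * m + 1 : ℕ) : ℝ) + 1 := by push_cast; ring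
    rw [this, Real.Gamma_nat_eq_factorial]
  have hdup := Real.Gamma_mul_Gamma_add_half ((m + 1 : ℕ) : ℝ)
  have harg : ((m + 1 : ℕ) : ℝ) + 1 / 2 = 1 / 2 + ((m + 1 : ℕ) : ℝ) := by ring
  rw [harg, hΓn, hΓ2n] at hdup
  have hmfac : (0 : ℝ) < (m ! : ℝ) := by exact_mod_cast m.factorial_pos
  have hΓhalf : Real.Gamma (1 / 2 + ((m + 1 : ℕ) : ℝ)) =
      ((2 * m + 1)! : ℝ) * (2 : ℝ) ^ (1 - 2 * ((m + 1 : ℕ) : ℝ)) * Real.sqrt Real.pi / (m !) := by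
    field_simp at hdup ⊢
    linarith [hdup]
  have h22 : (2 : ℝ) ^ (2 : ℝ) = 4 := by
    rw [show (2 : ℝ) = ((2 : ℕ) : ℝ) from by norm_num, Real.rpow_natCast]
    norm_num
  have key : (4 : ℝ) ^ (((m + 1 : ℕ) : ℝ) - 1 / 2) =
      (2 : ℝ) ^ ((4 * m + 2 : ℕ)) * (2 : ℝ) ^ (1 - 2 * ((m + 1 : ℕ) : ℝ)) := by
    rw [← h22, ← Real.rpow_mul two_pos.le, ← Real.rpow_natCast (2:ℝ) (4 * m + 2),
      ← Real.rpow_add two_pos]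
    congr 1
    push_cast
    ring
  have hchoose : ((2 * (m + 1)).choose (m + 1) : ℝ) * (m + 1)! * (m + 1)! = ((2 * (m + 1))! : ℝ) := by
    have h := Nat.choose_mul_factorial_mul_factorial (show m + 1 ≤ 2 * (m + 1) by omega)
    rw [show 2 * (m + 1) - (m + 1) = m + 1 by omega] at h
    exact_mod_cast h
  have h2fac : ((2 * (m + 1))! : ℝ) = (2 * (m + 1)) * ((2 * m + 1)! : ℝ) := by
    rw [show 2 * (m + 1) = (2 * m + 1) + 1 by ring]
    push_cast [Nat.factorial_succ]
    ring
  have hpow : (2 : ℝ) ^ (1 - 2 * ((m + 1 : ℕ) : ℝ)) ≠ 0 := by positivity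
  have hchoosepos : (0 : ℝ) < ((2 * (m + 1)).choose (m + 1) : ℝ) := by
    exact_mod_cast Nat.choose_pos (by omega : m + 1 ≤ 2 * (m + 1))
  have hfac1 : ((m + 1)! : ℝ) = (m + 1) * (m ! : ℝ) := by push_cast [Nat.factorial_succ]; ring
  rw [hΓn, hΓhalf, key]
  have hsq : Real.sqrt Real.pi * Real.sqrt Real.pi = Real.pi := Real.mul_self_sqrt hπ.le
  have h2m1 : (0 : ℝ) < ((2 * m + 1)! : ℝ) := by exact_mod_cast (2 * m + 1).factorial_pos
  rw [hfac1, h2fac] at hchoose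
  have h4 : (4 : ℝ) ^ (2 * (m + 1)) = (2 : ℝ) ^ (4 * m + 4) := by
    rw [show (4:ℝ) = 2 ^ 2 by norm_num, ← pow_mul]; ring_nf
  rw [h4]
  have hchoose' : ((2 * (m + 1)).choose (m + 1) : ℝ) * ((m : ℝ) + 1) * (m !) * (m !) =
      2 * ((2 * m + 1)! : ℝ) := by
    have hm1 : ((m : ℝ) + 1) ≠ 0 := by positivity
    apply mul_left_cancel₀ hm1
    nlinarith [hchoose]
  rw [← hsq]
  rw [Real.sqrt_mul_self (Real.sqrt_nonneg _)]
  field_simp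
  push_cast
  linear_combination ((2:ℝ) ^ (4 * m + 2) * 2) * hchoose'
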